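/- Let e = ±f_{t₁,…,t_m} ∈ V₀ be a nonempty sign tuple in the connected component of the empty tuple f₀. Then there exists a path e → f₀ in the sign-deletion graph whose label pattern has the form (i₁,…,i_T, t₁, t₁−1, …, 2, 1) with i_j > t₁ + 1 for all j = 1,…,T. -/

import Mathlib

/-- The alternating sign tuple `f_t = (1, −1, 1, …, (−1)^{t−1})`, with `+1 = true`. -/
def falt (t : ℕ) : List Bool := (List.range t).map fun j => decide (j % 2 = 0)

/-- Negation of a sign tuple. -/
def negT (l : List Bool) : List Bool := l.map not

/-- `Edge l i l'`: the edge labeled `i` (1-indexed) of the sign-deletion graph; it requires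
`1 ≤ i ≤ k−1`, `e_i = e_{i+1}`, and deletes the `i`-th and `(i+1)`-th entries of `l`. -/
def Edge (l : List Bool) (i : ℕ) (l' : List Bool) : Prop :=
  1 ≤ i ∧ i + 1 ≤ l.length ∧ l[i - 1]? = l[i]? ∧ l' = l.take (i - 1) ++ l.drop (i + 1)

/-- `PathP l pat l'`: a path from `l` to `l'` in the sign-deletion graph whose sequence
of edge labels (its pattern) is `pat`. -/
inductive PathP : List Bool → List ℕ → List Bool → Prop where
  | nil (l : List Bool) : PathP l [] l
  | cons {l l' l'' : List Bool} {i : ℕ} {is : List ℕ} :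
      Edge l i l' → PathP l' is l'' → PathP l (i :: is) l''

/-- The terminal vertex `sign(t)·f_{|t|}` attached to `t ∈ ℤ`. -/
def target (t : ℤ) : List Bool := if 0 ≤ t then falt t.toNat else negT (falt (-t).toNat)

/-- `V_t`: the set of sign tuples admitting a path to `sign(t)·f_{|t|}`. -/
def Vmem (t : ℤ) (l : List Bool) : Prop := ∃ pat : List ℕ, PathP l pat (target t)

/-- The alternating tuple of length `t` starting with the sign `s`. -/
def altFrom (s : Bool) : ℕ → List Bool
  | 0 => []
  | t + 1 => s :: altFrom (!s) t

/-- Auxiliary: concatenation of alternating blocks of lengths `ts`, starting with sign `s`,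
each block starting with the sign ending the previous one (so adjacent entries agree
exactly at block junctions). -/
def fcatAux (s : Bool) : List ℕ → List Bool
  | [] => []
  | t :: ts => altFrom s t ++ fcatAux (if t % 2 = 1 then s else !s) ts

/-- `f_{t₁,…,t_m}`: the concatenation of alternating blocks of lengths `t₁,…,t_m`. -/
def fcat (ts : List ℕ) : List Bool := fcatAux true ts

/-- `sgn ε l` is `l` if `ε = +1` and `−l` if `ε = −1`. -/
def sgn (e : Bool) (l : List Bool) : List Bool := if e then l else negT l

namespace S15

def step (a : Bool) : List Bool → List Bool
  | [] => [a]
  | b :: t => if a = b then t else a :: b :: t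

def nf (l : List Bool) : List Bool := l.foldr step []

def Red (l : List Bool) : Prop := List.IsChain (· ≠ ·) l

lemma red_step {w : List Bool} (h : Red w) (a : Bool) : Red (step a w) := by
  match w with
  | [] => simp [step, Red]
  | b :: t =>
    by_cases hab : a = b
    · simpa [step, hab, Red] using h.tail
    · have hst : step a (b :: t) = a :: b :: t := by simp [step, hab]
      rw [Red, hst, List.isChain_cons_cons]
      exact ⟨hab, h⟩

lemma red_nil : Red [] := List.isChain_nil

lemma red_nf (l : List Bool) : Red (nf l) := by
  induction l with
  | nil => exact red_nil
  | cons a l ih => exact red_step ih a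

lemma nf_cons (a : Bool) (l : List Bool) : nf (a :: l) = step a (nf l) := rfl

lemma step_step {w : List Bool} (h : Red w) (a : Bool) : step a (step a w) = w := by
  match w with
  | [] => simp [step]
  | b :: t =>
    by_cases hab : a = b
    · subst hab
      match t with
      | [] => simp [step]
      | c :: t' =>
        have hac : a ≠ c := (List.isChain_cons_cons.mp h).1
        simp [step, hac]
    · simp [step, hab]

lemma nf_append (u v : List Bool) : nf (u ++ v) = u.foldr step (nf v) := by
  simp [nf, List.foldr_append]

lemma nf_cancel (u : List Bool) (a : Bool) (v : List Bool) :
    nf (u ++ a :: a :: v) = nf (u ++ v) := by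
  rw [nf_append, nf_append]
  congr 1
  show step a (step a (nf v)) = nf v
  exact step_step (red_nf v) a

lemma nf_red {w : List Bool} (h : Red w) : nf w = w := by
  induction w with
  | nil => rfl
  | cons a t ih =>
    rw [nf_cons, ih h.tail]
    match t, h with
    | [], _ => simp [step]
    | b :: t', h =>
      have hab : a ≠ b := (List.isChain_cons_cons.mp h).1
      simp [step, hab]

lemma step_inj {w w' : List Bool} (h : Red w) (h' : Red w') (a : Bool)
    (heq : step a w = step a w') : w = w' := by
  have := step_step h a
  have := step_step h' a
  rw [← step_step h a, heq, step_step h' a]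

lemma red_foldr (u : List Bool) {w : List Bool} (h : Red w) : Red (u.foldr step w) := by
  induction u with
  | nil => exact h
  | cons a u ih => exact red_step ih a

lemma foldr_inj (u : List Bool) {w w' : List Bool} (h : Red w) (h' : Red w')
    (heq : u.foldr step w = u.foldr step w') : w = w' := by
  induction u with
  | nil => exact heq
  | cons a u ih => exact ih (step_inj (red_foldr u h) (red_foldr u h') a heq)


lemma edge_decomp {l : List Bool} {i : ℕ} {l' : List Bool} (h : Edge l i l') :
    ∃ a : Bool, l = l.take (i-1) ++ a :: a :: l.drop (i+1) := by
  obtain ⟨h1, h2, h3, _⟩ := h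
  have hi1 : i - 1 < l.length := by omega
  have hi : i < l.length := by omega
  refine ⟨l[i-1], ?_⟩
  have e0 : i - 1 + 1 = i := by omega
  have hd1 : l.drop (i-1) = l[i-1] :: l.drop i := by
    rw [List.drop_eq_getElem_cons hi1, e0]
  have hd2 : l.drop i = l[i] :: l.drop (i+1) := List.drop_eq_getElem_cons hi
  have hgl : l[i-1] = l[i] := by
    have := h3
    rw [List.getElem?_eq_getElem hi1, List.getElem?_eq_getElem hi] at this
    exact Option.some.inj this
  conv_lhs => rw [← List.take_append_drop (i-1) l]
  rw [hd1, hd2, ← hgl]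

lemma edge_nf {l : List Bool} {i : ℕ} {l' : List Bool} (h : Edge l i l') : nf l = nf l' := by
  obtain ⟨a, ha⟩ := edge_decomp h
  rw [h.2.2.2]
  conv_lhs => rw [ha]
  exact nf_cancel _ a _

lemma path_nf {l : List Bool} {pat : List ℕ} {l' : List Bool} (h : PathP l pat l') :
    nf l = nf l' := by
  induction h with
  | nil => rfl
  | cons e _ ih => exact (edge_nf e).trans ih

lemma path_append {l m r : List Bool} {p q : List ℕ}
    (h1 : PathP l p m) (h2 : PathP m q r) : PathP l (p ++ q) r := by
  induction h1 with
  | nil => exact h2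
  | cons e _ ih => exact PathP.cons e (ih h2)

lemma edge_shift (p : List Bool) {l : List Bool} {i : ℕ} {l' : List Bool}
    (h : Edge l i l') : Edge (p ++ l) (i + p.length) (p ++ l') := by
  obtain ⟨h1, h2, h3, h4⟩ := h
  refine ⟨by omega, by simp [List.length_append]; omega, ?_, ?_⟩
  · have e1 : i + p.length - 1 = p.length + (i - 1) := by omega
    have e2 : i + p.length = p.length + i := by omega
    rw [e1, e2, List.getElem?_append_right (by omega), List.getElem?_append_right (by omega)]
    simpa using h3
  · subst h4
    rw [List.take_append, List.drop_append,
      List.take_of_length_le (show p.length ≤ i + p.length - 1 by omega),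
      List.drop_of_length_le (show p.length ≤ i + p.length + 1 by omega)]
    have e1 : i + p.length - 1 - p.length = i - 1 := by omega
    have e2 : i + p.length + 1 - p.length = i + 1 := by omega
    rw [e1, e2]
    simp

lemma path_shift (p : List Bool) {l : List Bool} {pat : List ℕ} {l' : List Bool}
    (h : PathP l pat l') : PathP (p ++ l) (pat.map (· + p.length)) (p ++ l') := by
  induction h with
  | nil => exact PathP.nil _
  | cons e _ ih => exact PathP.cons (edge_shift p e) ih

lemma path_to_nf (l : List Bool) : ∃ pat, PathP l pat (nf l) := by
  induction l with
  | nil => exact ⟨[], PathP.nil _⟩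
  | cons a r ih =>
    obtain ⟨pat, hp⟩ := ih
    have hsh := path_shift [a] hp
    simp only [List.length_cons, List.length_nil, List.singleton_append] at hsh
    rw [nf_cons]
    match hnf : nf r with
    | [] => exact ⟨pat.map (· + 1), by rw [hnf] at hsh; simpa [step] using hsh⟩
    | b :: t =>
      rw [hnf] at hsh
      by_cases hab : a = b
      · subst hab
        refine ⟨pat.map (· + 1) ++ [1], ?_⟩
        have hst : step a (a :: t) = t := by simp [step]
        rw [hst]
        refine path_append hsh (PathP.cons ?_ (PathP.nil _))
        exact ⟨le_refl 1, by simp, by simp, by simp⟩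
      · exact ⟨pat.map (· + 1), by simpa [step, hab] using hsh⟩

lemma path_pos {l : List Bool} {pat : List ℕ} {l' : List Bool} (h : PathP l pat l') :
    ∀ i ∈ pat, 1 ≤ i := by
  induction h with
  | nil => intro i hi; simp at hi
  | cons e _ ih =>
    intro j hj
    rcases List.mem_cons.mp hj with h | h
    · exact h ▸ e.1
    · exact ih j h

lemma altFrom_length (s : Bool) (t : ℕ) : (altFrom s t).length = t := by
  induction t generalizing s with
  | zero => rfl
  | succ n ih => simp [altFrom, ih]

lemma altFrom_red (s : Bool) (t : ℕ) : Red (altFrom s t) := by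
  induction t generalizing s with
  | zero => exact red_nil
  | succ n ih =>
    cases n with
    | zero => simp [altFrom, Red]
    | succ m =>
      rw [Red, altFrom, altFrom, List.isChain_cons_cons]
      exact ⟨by simp, ih (!s)⟩

lemma red_rev {l : List Bool} (h : Red l) : Red l.reverse := by
  rw [Red, List.isChain_reverse]
  exact List.IsChain.imp (fun a b hab => Ne.symm hab) h

lemma altFrom_succ_append (s : Bool) (n : ℕ) :
    altFrom s (n+1) = altFrom s n ++ [if n % 2 = 0 then s else !s] := by
  induction n generalizing s with
  | zero => simp [altFrom]
  | succ m ih =>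
    rw [show altFrom s (m+2) = s :: altFrom (!s) (m+1) from rfl, ih (!s)]
    rcases Nat.mod_two_eq_zero_or_one m with h | h
    · have h2 : (m+1) % 2 = 1 := by omega
      simp [h, h2, altFrom]
    · have h2 : (m+1) % 2 = 0 := by omega
      simp [h, h2, altFrom]

lemma nf_palindrome (l : List Bool) : nf (l ++ l.reverse) = [] := by
  induction l using List.reverseRecOn with
  | nil => rfl
  | append_singleton x a ih =>
    have h : (x ++ [a]) ++ (x ++ [a]).reverse = x ++ (a :: a :: x.reverse) := by
      simp
    rw [h, nf_cancel x a x.reverse, ih]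

lemma foldr_rev (s : Bool) (t : ℕ) :
    (altFrom s t).foldr step (altFrom s t).reverse = [] := by
  have h1 := nf_palindrome (altFrom s t)
  rwa [nf_append, nf_red (red_rev (altFrom_red s t))] at h1

lemma phase2 (s : Bool) (t : ℕ) :
    PathP (altFrom s t ++ (altFrom s t).reverse) ((List.range t).map (t - ·)) [] := by
  induction t generalizing s with
  | zero => exact PathP.nil []
  | succ n ih =>
    have hpat : (List.range (n+1)).map ((n+1) - ·)
        = (n+1) :: (List.range n).map (n - ·) := by
      rw [List.range_succ_eq_map, List.map_cons, List.map_map]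
      simp only [Nat.sub_zero]
      congr 1
      exact List.map_congr_left fun x _ => by simp only [Function.comp_apply]; omega
    rw [hpat]
    set c := if n % 2 = 0 then s else !s with hc
    have hA : altFrom s (n+1) = altFrom s n ++ [c] := altFrom_succ_append s n
    have hrev : (altFrom s (n+1)).reverse = c :: (altFrom s n).reverse := by
      rw [hA]; simp
    have hlen : (altFrom s n).length = n := altFrom_length s n
    have hl : altFrom s (n+1) ++ (altFrom s (n+1)).reverse
        = altFrom s n ++ (c :: c :: (altFrom s n).reverse) := by
      rw [hA]; simp
    rw [hl]
    refine PathP.cons ?_ (ih s)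
    refine ⟨by omega, ?_, ?_, ?_⟩
    · simp only [List.length_append, hlen, List.length_cons, List.length_reverse]; omega
    · have e1 : n + 1 - 1 = n := by omega
      rw [e1, List.getElem?_append_right (by omega), List.getElem?_append_right (by omega),
        hlen]
      simp
    · rw [List.take_append, List.drop_append,
        List.take_of_length_le (by rw [hlen]; omega),
        List.drop_of_length_le (by rw [hlen]; omega), hlen]
      have e1 : n + 1 - 1 - n = 0 := by omega
      have e2 : n + 1 + 1 - n = 2 := by omega
      rw [e1, e2]
      simp

lemma negT_altFrom (s : Bool) (t : ℕ) : negT (altFrom s t) = altFrom (!s) t := by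
  induction t generalizing s with
  | zero => rfl
  | succ n ih => rw [altFrom, altFrom, show negT (s :: altFrom (!s) n) = (!s) :: negT (altFrom (!s) n) from rfl, ih]

lemma negT_fcatAux (s : Bool) (ts : List ℕ) : negT (fcatAux s ts) = fcatAux (!s) ts := by
  induction ts generalizing s with
  | nil => rfl
  | cons t ts ih =>
    rw [fcatAux, fcatAux, show negT (altFrom s t ++ fcatAux (if t % 2 = 1 then s else !s) ts)
      = negT (altFrom s t) ++ negT (fcatAux (if t % 2 = 1 then s else !s) ts) from List.map_append,
      negT_altFrom, ih]
    congr 2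
    by_cases h : t % 2 = 1 <;> simp [h]

lemma negT_append (u v : List Bool) : negT (u ++ v) = negT u ++ negT v :=
  List.map_append

lemma sgn_fcat_decomp (ε : Bool) (k : ℕ) (rest : List ℕ) :
    sgn ε (fcat ((k+1) :: rest))
      = altFrom ε (k+1) ++ fcatAux (if k % 2 = 0 then ε else !ε) rest := by
  have hmod : (k+1) % 2 = 1 ↔ k % 2 = 0 := by omega
  rw [fcat, fcatAux]
  cases ε with
  | true =>
    show altFrom true (k+1) ++ fcatAux (if (k+1) % 2 = 1 then true else !true) rest = _
    congr 1
    by_cases h : k % 2 = 0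
    · rw [if_pos (hmod.mpr h), if_pos h]
    · rw [if_neg (fun hh => h (hmod.mp hh)), if_neg h]
  | false =>
    show negT (altFrom true (k+1) ++ fcatAux (if (k+1) % 2 = 1 then true else !true) rest) = _
    rw [negT_append, negT_altFrom, negT_fcatAux]
    congr 1
    by_cases h : k % 2 = 0
    · rw [if_pos (hmod.mpr h), if_pos h]; rfl
    · rw [if_neg (fun hh => h (hmod.mp hh)), if_neg h]; rfl

end S15

open S15

/-- if `e = ±f_{t₁,…,t_m}` is a nonempty tuple in `V₀`, there is a path
`e → f₀` whose pattern is `(i₁,…,i_T, t₁, t₁−1, …, 2, 1)` with every `i_j > t₁ + 1`. -/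
theorem stmt_15 (ε : Bool) (t₁ : ℕ) (rest : List ℕ) (h₁ : 0 < t₁)
    (hr : ∀ x ∈ rest, 0 < x) (e : List Bool) (he : e = sgn ε (fcat (t₁ :: rest)))
    (h0 : Vmem 0 e) :
    ∃ pre : List ℕ, (∀ i ∈ pre, t₁ + 1 < i) ∧
      PathP e (pre ++ (List.range t₁).map fun j => t₁ - j) [] := by
  obtain ⟨k, rfl⟩ : ∃ k, t₁ = k + 1 := ⟨t₁ - 1, by omega⟩
  set c : Bool := if k % 2 = 0 then ε else !ε with hc
  set A : List Bool := altFrom ε (k+1) with hAdef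
  have he2 : e = A ++ fcatAux c rest := by rw [he, sgn_fcat_decomp]
  obtain ⟨pat0, hp0⟩ := h0
  have htgt : target 0 = [] := by simp [target, falt]
  rw [htgt] at hp0
  have hnfe : nf e = [] := path_nf hp0
  have h1 : A.foldr step (nf (fcatAux c rest)) = [] := by
    rw [← nf_append, ← he2]; exact hnfe
  have hredrev : Red A.reverse := red_rev (altFrom_red ε (k+1))
  have h2 : A.foldr step A.reverse = [] := foldr_rev ε (k+1)
  have hsufnf : nf (fcatAux c rest) = A.reverse :=
    foldr_inj A (red_nf _) hredrev (h1.trans h2.symm)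
  have hlenA : A.length = k + 1 := altFrom_length ε (k+1)
  have hArev : A.reverse = c :: (altFrom ε k).reverse := by
    rw [hAdef, altFrom_succ_append]; simp [hc]
  cases rest with
  | nil =>
    exfalso
    have h3 : ([] : List Bool) = A.reverse := hsufnf
    have h4 := congrArg List.length h3
    simp [hlenA] at h4
  | cons t₂ rest' =>
    obtain ⟨k₂, rfl⟩ : ∃ k₂, t₂ = k₂ + 1 := ⟨t₂ - 1, by have := hr t₂ (by simp); omega⟩
    set r : List Bool := altFrom (!c) k₂ ++ fcatAux (if (k₂+1) % 2 = 1 then c else !c) rest'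
      with hrdef
    have hsuf : fcatAux c ((k₂+1) :: rest') = c :: r := by
      rw [fcatAux, altFrom, hrdef]; simp
    rw [hsuf] at hsufnf
    have hstep : step c (nf r) = A.reverse := by rw [← hsufnf, nf_cons]
    have hnc : step c (nf r) = c :: nf r := by
      match hnr : nf r with
      | [] => simp [step]
      | b :: tl =>
        by_cases hcb : c = b
        · exfalso
          subst hcb
          have hred : Red (c :: tl) := hnr ▸ red_nf r
          have htl : tl = A.reverse := by
            have h5 := hstep; rw [hnr] at h5; simpa [step] using h5
          rw [htl, hArev] at hred
          exact (List.isChain_cons_cons.mp hred).1 rfl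
        · simp [step, hcb]
    obtain ⟨pat, hpath⟩ := path_to_nf r
    have hpos : ∀ i ∈ pat, 1 ≤ i := path_pos hpath
    have hsh := path_shift [c] hpath
    simp only [List.length_cons, List.length_nil, List.singleton_append] at hsh
    rw [← hnc, hstep] at hsh
    rw [← hsuf] at hsh
    have hbig := path_shift A hsh
    simp only [hlenA] at hbig
    refine ⟨(pat.map (· + 1)).map (· + (k+1)), ?_, ?_⟩
    · intro i hi
      simp only [List.mem_map] at hi
      obtain ⟨x, ⟨y, hy, rfl⟩, rfl⟩ := hi
      have := hpos y hy
      omega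
    · rw [he2]
      exact path_append hbig (phase2 ε (k+1))
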